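/- Let (λ_k)_{k≥1} satisfy λ_k > 0 for all k, set Λ_n = ∑_{k=1}^n λ_k, suppose M = sup_{n≥1} (Λ_n/λ_n)·log((Λ_{n+1}/λ_{n+1})/(Λ_n/λ_n)) is finite, and let μ > e^M. If Ω_{k+1} > 0 satisfies Ω_{k+1}^{Λ_{k+1}} = μ^{−λ_{k+1}} · ( Ω_k·Λ_k / ( λ_{k+1}·(Λ_k/λ_k − Ω_k) ) )^{Λ_k} where 0 < Ω_k < (Λ_k/λ_k)/(Λ_{k+1}/λ_{k+1}), then Ω_{k+1} < μ^{−λ_{k+1}/Λ_{k+1}} < (Λ_{k+1}/λ_{k+1})/(Λ_{k+2}/λ_{k+2}). -/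

import Mathlib

/-- Induction step for inequality (2.3): if `0 < Ω_k < (Λ_k/λ_k)/(Λ_{k+1}/λ_{k+1})`
and `Ω_{k+1} > 0` satisfies the recursion (2.2), then
`Ω_{k+1} < μ^{-λ_{k+1}/Λ_{k+1}} < (Λ_{k+1}/λ_{k+1})/(Λ_{k+2}/λ_{k+2})`. -/
theorem Omega_induction_step
    (lam : ℕ → ℝ) (hlam : ∀ k ≥ 1, 0 < lam k)
    (Lam : ℕ → ℝ) (hLam : ∀ n, Lam n = ∑ k ∈ Finset.Icc 1 n, lam k)
    (M : ℝ)
    (hM : IsLUB {x : ℝ | ∃ n ≥ 1, x = (Lam n / lam n) *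
        Real.log ((Lam (n + 1) / lam (n + 1)) / (Lam n / lam n))} M)
    (μ : ℝ) (hμ : Real.exp M < μ)
    (k : ℕ) (hk : 1 ≤ k) (Ωk Ωk1 : ℝ)
    (hΩk0 : 0 < Ωk) (hΩk : Ωk < (Lam k / lam k) / (Lam (k + 1) / lam (k + 1)))
    (hΩk1 : 0 < Ωk1)
    (hrec : Ωk1 ^ Lam (k + 1) =
      μ ^ (-lam (k + 1)) *
        (Ωk * Lam k / (lam (k + 1) * (Lam k / lam k - Ωk))) ^ Lam k) :
    Ωk1 < μ ^ (-(lam (k + 1) / Lam (k + 1))) ∧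
      μ ^ (-(lam (k + 1) / Lam (k + 1))) <
        (Lam (k + 1) / lam (k + 1)) / (Lam (k + 2) / lam (k + 2)) := by
  have hl1 := hlam k hk
  have hl2 := hlam (k + 1) (by omega)
  have hl3 := hlam (k + 2) (by omega)
  have hLpos : ∀ n, 1 ≤ n → 0 < Lam n := by
    intro n hn
    rw [hLam]
    apply Finset.sum_pos
    · intro i hi; exact hlam i (Finset.mem_Icc.mp hi).1
    · exact ⟨1, Finset.mem_Icc.mpr ⟨le_refl 1, hn⟩⟩
  have hL1 := hLpos k hk
  have hL2 := hLpos (k + 1) (by omega)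
  have hL3 := hLpos (k + 2) (by omega)
  have hμ0 : (0 : ℝ) < μ := lt_trans (Real.exp_pos M) hμ
  have ha2 : 0 < Lam (k + 1) / lam (k + 1) := div_pos hL2 hl2
  have ha3 : 0 < Lam (k + 2) / lam (k + 2) := div_pos hL3 hl3
  have hLsucc : Lam (k + 1) = Lam k + lam (k + 1) := by
    rw [hLam, hLam, Finset.sum_Icc_succ_top (by omega : 1 ≤ k + 1)]
  have hMlt : M < Real.log μ := (Real.lt_log_iff_exp_lt hμ0).mpr hμ
  -- Second inequality
  have hub : (Lam (k + 1) / lam (k + 1)) *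
      Real.log ((Lam (k + 2) / lam (k + 2)) / (Lam (k + 1) / lam (k + 1))) ≤ M :=
    hM.1 ⟨k + 1, by omega, rfl⟩
  have ht : Real.log ((Lam (k + 2) / lam (k + 2)) / (Lam (k + 1) / lam (k + 1))) <
      Real.log μ / (Lam (k + 1) / lam (k + 1)) :=
    (lt_div_iff₀' ha2).mpr (lt_of_le_of_lt hub hMlt)
  have hr0 : 0 < (Lam (k + 2) / lam (k + 2)) / (Lam (k + 1) / lam (k + 1)) :=
    div_pos ha3 ha2
  have hrlt : (Lam (k + 2) / lam (k + 2)) / (Lam (k + 1) / lam (k + 1)) <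
      μ ^ (lam (k + 1) / Lam (k + 1)) := by
    have := Real.exp_lt_exp.mpr ht
    rw [Real.exp_log hr0] at this
    rw [Real.rpow_def_of_pos hμ0]
    refine this.trans_le (le_of_eq ?_)
    congr 1
    field_simp
  have hsecond : μ ^ (-(lam (k + 1) / Lam (k + 1))) <
      (Lam (k + 1) / lam (k + 1)) / (Lam (k + 2) / lam (k + 2)) := by
    rw [Real.rpow_neg hμ0.le]
    calc (μ ^ (lam (k + 1) / Lam (k + 1)))⁻¹
        < ((Lam (k + 2) / lam (k + 2)) / (Lam (k + 1) / lam (k + 1)))⁻¹ :=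
          inv_strictAnti₀ hr0 hrlt
      _ = (Lam (k + 1) / lam (k + 1)) / (Lam (k + 2) / lam (k + 2)) := by
          rw [inv_div]
  -- First inequality
  have ha2gt1 : 1 < Lam (k + 1) / lam (k + 1) :=
    (one_lt_div hl2).mpr (by rw [hLsucc]; linarith)
  have hΩklt : Ωk < Lam k / lam k :=
    hΩk.trans_le (div_le_self (div_pos hL1 hl1).le ha2gt1.le)
  have hden : 0 < lam (k + 1) * (Lam k / lam k - Ωk) :=
    mul_pos hl2 (sub_pos.mpr hΩklt)
  have hb1 : Ωk * Lam k < lam (k + 1) * (Lam k / lam k - Ωk) := by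
    have h' : Ωk * (Lam (k + 1) / lam (k + 1)) < Lam k / lam k :=
      (lt_div_iff₀ ha2).mp hΩk
    rw [← mul_div_assoc] at h'
    have h2 : Ωk * Lam (k + 1) < Lam k / lam k * lam (k + 1) :=
      (div_lt_iff₀ hl2).mp h'
    rw [hLsucc] at h2
    nlinarith
  have hb0 : 0 ≤ Ωk * Lam k / (lam (k + 1) * (Lam k / lam k - Ωk)) :=
    div_nonneg (mul_pos hΩk0 hL1).le hden.le
  have hblt1 : Ωk * Lam k / (lam (k + 1) * (Lam k / lam k - Ωk)) < 1 :=
    (div_lt_one hden).mpr hb1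
  have hpow : (Ωk * Lam k / (lam (k + 1) * (Lam k / lam k - Ωk))) ^ Lam k < 1 :=
    Real.rpow_lt_one hb0 hblt1 hL1
  have hμpos : 0 < μ ^ (-lam (k + 1)) := Real.rpow_pos_of_pos hμ0 _
  have hkey : Ωk1 ^ Lam (k + 1) < μ ^ (-lam (k + 1)) := by
    rw [hrec]
    exact mul_lt_of_lt_one_right hμpos hpow
  have heq : (μ ^ (-(lam (k + 1) / Lam (k + 1)))) ^ Lam (k + 1) = μ ^ (-lam (k + 1)) := by
    rw [← Real.rpow_mul hμ0.le]
    congr 1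
    field_simp
  have hfirst : Ωk1 < μ ^ (-(lam (k + 1) / Lam (k + 1))) := by
    by_contra h
    push_neg at h
    have := Real.rpow_le_rpow (Real.rpow_pos_of_pos hμ0 _).le h hL2.le
    rw [heq] at this
    exact absurd hkey (not_lt.mpr this)
  exact ⟨hfirst, hsecond⟩
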